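/- Let q be a positive integer, let a be multiplicatively invertible in ℤ/qℤ, and let r = (r₁,…,r_{q−1}) ∈ ℕ₀^{q−1}. Then |𝒲^{(q)}_r| = |𝒲^{(q)}_{ᵃr}|. -/

import Mathlib

open Finset

/-- A composition: a list of positive natural numbers. -/
def IsComposition (δ : List ℕ) : Prop := ∀ x ∈ δ, 0 < x

/-- `δ` is `q'`-cumulative: no partial sum of `δ` (including the total sum, so
that the empty composition is excluded) is divisible by `q`. -/
def QCum (q : ℕ) (δ : List ℕ) : Prop :=
  ¬ q ∣ δ.sum ∧ ∀ j, 1 ≤ j → j ≤ δ.length → ¬ q ∣ (δ.take j).sum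

/-- The partition `((q-1)^{r (q-1)}, …, 2^{r 2}, 1^{r 1})` as a multiset. -/
def muOf (q : ℕ) (r : ℕ → ℕ) : Multiset ℕ :=
  ∑ i ∈ Finset.Ico 1 q, Multiset.replicate (r i) i

/-- `𝒲^{(q)}_r`: the set of `q'`-cumulative compositions which rearrange to the
partition `((q-1)^{r (q-1)}, …, 2^{r 2}, 1^{r 1})`. -/
def W (q : ℕ) (r : ℕ → ℕ) : Set (List ℕ) :=
  {δ | (↑δ : Multiset ℕ) = muOf q r ∧ QCum q δ}

/-- `r_j(λ)`: the number of parts `i ≥ 1` of `λ` with `i ≡ j (mod q)`. -/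
def rres (q : ℕ) (lam : Multiset ℕ) (j : ℕ) : ℕ :=
  Multiset.card (lam.filter fun i => 1 ≤ i ∧ i % q = j)

/-- `c^{(q)}_λ`: the number of `q'`-cumulative compositions rearranging to `λ`. -/
noncomputable def cnum (q : ℕ) (lam : Multiset ℕ) : ℕ :=
  Nat.card {δ : List ℕ // (↑δ : Multiset ℕ) = lam ∧ QCum q δ}

/-- `‖r‖ = ∑_{i=1}^{q-1} i·r_i`. -/
def normk (q : ℕ) (r : ℕ → ℕ) : ℕ := ∑ i ∈ Finset.Ico 1 q, i * r i

/-- `|r|_q = (q-1) + ∑_{i=2}^{q-1} (q-i)·r_i`. -/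
def absq (q : ℕ) (r : ℕ → ℕ) : ℕ := (q - 1) + ∑ i ∈ Finset.Ico 2 q, (q - i) * r i

/-- `max r = max{r_1, …, r_{q-1}}`. -/
def maxr (q : ℕ) (r : ℕ → ℕ) : ℕ := (Finset.Ico 1 q).sup r


section AuxStmt10

private lemma mem_muOf' {q : ℕ} {r : ℕ → ℕ} {x : ℕ} (hx : x ∈ muOf q r) :
    x ∈ Finset.Ico 1 q := by
  unfold muOf at hx
  rw [Multiset.mem_sum] at hx
  obtain ⟨i, hi, hxi⟩ := hx
  rwa [Multiset.eq_of_mem_replicate hxi]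

private lemma map_sum_mod (q a : ℕ) : ∀ l : List ℕ,
    (l.map fun i => a * i % q).sum ≡ a * l.sum [MOD q]
  | [] => by simp [Nat.ModEq.refl]
  | x :: l => by
    simp only [List.map_cons, List.sum_cons, Nat.mul_add]
    exact Nat.ModEq.add (Nat.mod_modEq (a * x) q) (map_sum_mod q a l)

private lemma mulmod_mem {q a : ℕ} (ha : Nat.Coprime a q) {i : ℕ}
    (hi : i ∈ Finset.Ico 1 q) : a * i % q ∈ Finset.Ico 1 q := by
  rw [Finset.mem_Ico] at hi ⊢
  have hq : 0 < q := lt_of_le_of_lt (Nat.zero_le _) hi.2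
  refine ⟨?_, Nat.mod_lt _ hq⟩
  rcases Nat.eq_zero_or_pos (a * i % q) with h | h
  · exfalso
    have hdvd : q ∣ a * i := Nat.dvd_of_mod_eq_zero h
    have : q ∣ i := (Nat.Coprime.symm ha).dvd_of_dvd_mul_left hdvd
    exact absurd (Nat.le_of_dvd hi.1 this) (not_le.2 hi.2)
  · exact h

private lemma inv_cancel {q a b : ℕ} (hab : a * b % q = 1 % q) {i : ℕ}
    (hi : i ∈ Finset.Ico 1 q) : b * (a * i % q) % q = i := by
  rw [Finset.mem_Ico] at hi
  have h : b * (a * i % q) ≡ i [MOD q] := by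
    calc b * (a * i % q) ≡ b * (a * i) [MOD q] := (Nat.mod_modEq _ q).mul_left b
      _ = a * b * i := by ring
      _ ≡ 1 * i [MOD q] := Nat.ModEq.mul_right i hab
      _ = i := one_mul i
  rw [Nat.ModEq] at h
  rw [h, Nat.mod_eq_of_lt hi.2]

private lemma coprime_of_inv {q a b : ℕ} (hq : 2 ≤ q) (hab : a * b % q = 1 % q) :
    Nat.Coprime b q := by
  have h1 : (1 : ℕ) % q = 1 := Nat.mod_eq_of_lt hq
  have : Nat.gcd b q ∣ 1 := by
    rw [← h1, ← hab]
    exact (Nat.dvd_mod_iff (Nat.gcd_dvd_right b q)).2 ((Nat.gcd_dvd_left b q).mul_left a)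
  exact Nat.dvd_one.mp this

private lemma W_map {q a b : ℕ} (ha : Nat.Coprime a q) (hb : Nat.Coprime b q)
    {r r' : ℕ → ℕ}
    (hr' : ∀ i j, 1 ≤ i → i ≤ q - 1 → 1 ≤ j → j ≤ q - 1 →
      j % q = a * i % q → r' j = r i)
    (hab : a * b % q = 1 % q)
    {δ : List ℕ} (hδ : δ ∈ W q r) :
    (δ.map fun i => a * i % q) ∈ W q r' := by
  obtain ⟨hcoe, hsum, hpref⟩ := hδ
  have hba : b * a % q = 1 % q := by rw [Nat.mul_comm]; exact hab
  refine ⟨?_, ?_, ?_⟩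
  · show ((δ.map fun i => a * i % q : List ℕ) : Multiset ℕ) = muOf q r'
    have h1 : ((δ.map fun i => a * i % q : List ℕ) : Multiset ℕ)
        = Multiset.map (fun i => a * i % q) (muOf q r) := by
      rw [← hcoe]; rfl
    rw [h1]
    unfold muOf
    rw [← Multiset.coe_mapAddMonoidHom, map_sum]
    simp only [Multiset.coe_mapAddMonoidHom, Multiset.map_replicate]
    refine Finset.sum_bij' (fun i _ => a * i % q) (fun j _ => b * j % q)
      (fun i hi => mulmod_mem ha hi) (fun j hj => mulmod_mem hb hj)
      (fun i hi => inv_cancel hab hi) (fun j hj => inv_cancel hba hj)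
      (fun i hi => ?_)
    congr 1
    have hiI := Finset.mem_Ico.1 hi
    have hfI := Finset.mem_Ico.1 (mulmod_mem ha hi)
    refine (hr' i (a * i % q) hiI.1 (by omega) hfI.1 (by omega) ?_).symm
    exact Nat.mod_mod_of_dvd _ dvd_rfl
  · intro hdvd
    have h := map_sum_mod q a δ
    rw [Nat.ModEq] at h
    have : q ∣ a * δ.sum := by
      rw [Nat.dvd_iff_mod_eq_zero] at hdvd ⊢
      omega
    exact hsum (ha.symm.dvd_of_dvd_mul_left this)
  · intro j hj1 hj2 hdvd
    rw [List.length_map] at hj2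
    rw [← List.map_take] at hdvd
    have h := map_sum_mod q a (δ.take j)
    rw [Nat.ModEq] at h
    have : q ∣ a * (δ.take j).sum := by
      rw [Nat.dvd_iff_mod_eq_zero] at hdvd ⊢
      omega
    exact hpref j hj1 hj2 (ha.symm.dvd_of_dvd_mul_left this)

end AuxStmt10

/-- Lemma 2: if `a` is invertible mod `q` and `r'` is the twist `ᵃr` of `r`
(i.e. `r'_j = r_i` whenever `1 ≤ i, j ≤ q-1` and `j ≡ a·i (mod q)`), then
`|𝒲^{(q)}_r| = |𝒲^{(q)}_{ᵃr}|`. -/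
theorem stmt10 (q : ℕ) (hq : 0 < q) (a : ℕ) (ha : Nat.Coprime a q)
    (r r' : ℕ → ℕ)
    (hr' : ∀ i j, 1 ≤ i → i ≤ q - 1 → 1 ≤ j → j ≤ q - 1 →
      j % q = a * i % q → r' j = r i) :
    Nat.card ↥(W q r) = Nat.card ↥(W q r') := by
  rcases Nat.lt_or_ge q 2 with hq2 | hq2
  · -- q = 1 : both sides empty
    have hq1 : q = 1 := by omega
    subst hq1
    have h : ∀ s : ℕ → ℕ, W 1 s = ∅ := by
      intro s
      ext δ
      simp only [W, Set.mem_setOf_eq, Set.mem_empty_iff_false, iff_false]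
      rintro ⟨-, hsum, -⟩
      exact hsum (one_dvd _)
    rw [h r, h r']
  · obtain ⟨b, -, hb1⟩ := Nat.exists_mul_mod_eq_one_of_coprime ha hq2
    have hab : a * b % q = 1 % q := by rw [hb1, Nat.mod_eq_of_lt hq2]
    have hba : b * a % q = 1 % q := by rw [Nat.mul_comm]; exact hab
    have hb : Nat.Coprime b q := coprime_of_inv hq2 hab
    have hr2 : ∀ i j, 1 ≤ i → i ≤ q - 1 → 1 ≤ j → j ≤ q - 1 →
        j % q = b * i % q → r j = r' i := by
      intro i j hi1 hi2 hj1 hj2 hji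
      have hiq : i % q = a * j % q := by
        have h1 : a * j ≡ a * (b * i) [MOD q] := Nat.ModEq.mul_left a hji
        have h2 : a * (b * i) = a * b * i := by ring
        have h3 : a * b * i ≡ 1 * i [MOD q] := Nat.ModEq.mul_right i hab
        have h4 : a * j ≡ i [MOD q] := h1.trans (h2 ▸ h3.trans (by rw [one_mul]))
        rw [Nat.ModEq] at h4
        exact h4.symm
      exact (hr' j i hj1 hj2 hi1 hi2 hiq).symm
    refine Nat.card_congr ⟨fun δ => ⟨δ.1.map fun i => a * i % q, W_map ha hb hr' hab δ.2⟩,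
      fun δ => ⟨δ.1.map fun i => b * i % q, W_map hb ha hr2 hba δ.2⟩, ?_, ?_⟩
    · rintro ⟨δ, hδ⟩
      apply Subtype.ext
      show (δ.map fun i => a * i % q).map (fun i => b * i % q) = δ
      rw [List.map_map]
      have hmem : ∀ x ∈ δ, (fun i => b * i % q) ((fun i => a * i % q) x) = x := by
        intro x hx
        have : x ∈ muOf q r := by
          rw [← hδ.1]
          exact hx
        exact inv_cancel hab (mem_muOf' this)
      calc δ.map ((fun i => b * i % q) ∘ fun i => a * i % q)
          = δ.map id := List.map_congr_left hmem
        _ = δ := List.map_id δ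
    · rintro ⟨δ, hδ⟩
      apply Subtype.ext
      show (δ.map fun i => b * i % q).map (fun i => a * i % q) = δ
      rw [List.map_map]
      have hmem : ∀ x ∈ δ, (fun i => a * i % q) ((fun i => b * i % q) x) = x := by
        intro x hx
        have : x ∈ muOf q r' := by
          rw [← hδ.1]
          exact hx
        exact inv_cancel hba (mem_muOf' this)
      calc δ.map ((fun i => a * i % q) ∘ fun i => b * i % q)
          = δ.map id := List.map_congr_left hmem
        _ = δ := List.map_id δ
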